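/- arXiv:1912.03220 — 4 statements merged into one kernel-verified Lean document; each statement's English description precedes it below -/
import Mathlib

section
/- Let F_t = {f_{(i,t)}(x) := t·f_i(x) + q_i : 1 ≤ i ≤ N} be a one-parameter affine family on ℝ^d with t_0 = 1/ρ(F), and assume F_t is not quasi-linear. Then there exists a real number τ > 0 such that for every t ∈ (0, τ) at which the maps f_{(1,t)}, …, f_{(N,t)} do not all have a common fixed point, the attractor A_t is not connected. -/
open Metric Filter Set
open scoped RealInnerProductSpace

noncomputable section

/-- The Hutchinson operator associated with a family of maps. -/
def hutch {ι E : Type*} (f : ι → E → E) (K : Set E) : Set E := ⋃ i, f i '' K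

/-- `A` is the attractor of the IFS `f`: `A` is a nonempty compact set such that the iterates
of the Hutchinson operator applied to any nonempty compact set converge to `A` in the
Hausdorff metric. -/
def IsAttractor {ι E : Type*} [MetricSpace E] (f : ι → E → E) (A : Set E) : Prop :=
  A.Nonempty ∧ IsCompact A ∧
    ∀ K : Set E, K.Nonempty → IsCompact K →
      Tendsto (fun n : ℕ => hausdorffDist ((hutch f)^[n] K) A) atTop (nhds 0)

/-- The joint spectral radius of a finite family of continuous linear maps. -/
def jsr {E : Type*} [NormedAddCommGroup E] [NormedSpace ℝ E] {N : ℕ}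
    (L : Fin N → E →L[ℝ] E) : ℝ :=
  limsup (fun k : ℕ =>
    (⨆ σ : Fin k → Fin N, ‖(List.ofFn fun j : Fin k => L (σ j)).prod‖) ^ ((1 : ℝ) / (k : ℝ)))
    atTop

/-- The one-parameter affine family `f_{(i,t)}(x) = t • f_i(x) + q_i` where
`f_i(x) = L_i x + a_i`. -/
def fam {E : Type*} [NormedAddCommGroup E] [NormedSpace ℝ E] {N : ℕ}
    (L : Fin N → E →L[ℝ] E) (a q : Fin N → E) (t : ℝ) (i : Fin N) (x : E) : E :=
  t • (L i x + a i) + q i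

/-- The family is linear: every `f_{(i,t)}`, `t ∈ [0, t₀)`, is conjugate to a linear map by a
single invertible affine map `h` independent of `i` and `t`. -/
def IsLinearFamily {E : Type*} [NormedAddCommGroup E] [NormedSpace ℝ E] {N : ℕ}
    (L : Fin N → E →L[ℝ] E) (a q : Fin N → E) : Prop :=
  ∃ h : E ≃ᵃ[ℝ] E, ∀ i : Fin N, ∀ t : ℝ, 0 ≤ t → t < 1 / jsr L →
    ∃ M : E →ₗ[ℝ] E, ∀ x, fam L a q t i x = h.symm (M (h x))

/-- The family is quasi-linear: for each `t ∈ [0, t₀)` there is an invertible affine map `h_t`,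
independent of `i`, conjugating every `f_{(i,t)}` to a linear map. -/
def IsQuasiLinearFamily {E : Type*} [NormedAddCommGroup E] [NormedSpace ℝ E] {N : ℕ}
    (L : Fin N → E →L[ℝ] E) (a q : Fin N → E) : Prop :=
  ∀ t : ℝ, 0 ≤ t → t < 1 / jsr L → ∃ h : E ≃ᵃ[ℝ] E, ∀ i : Fin N,
    ∃ M : E →ₗ[ℝ] E, ∀ x, fam L a q t i x = h.symm (M (h x))

/-- The family is semi-linear: for each `i` there is an invertible affine map `h_i`,
independent of `t`, conjugating `f_{(i,t)}` to a linear map for all `t ∈ [0, t₀)`. -/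
def IsSemiLinearFamily {E : Type*} [NormedAddCommGroup E] [NormedSpace ℝ E] {N : ℕ}
    (L : Fin N → E →L[ℝ] E) (a q : Fin N → E) : Prop :=
  ∀ i : Fin N, ∃ h : E ≃ᵃ[ℝ] E, ∀ t : ℝ, 0 ≤ t → t < 1 / jsr L →
    ∃ M : E →ₗ[ℝ] E, ∀ x, fam L a q t i x = h.symm (M (h x))

/-- The hyperplane `{x | φ x = c}` (with `φ` a nonzero linear functional) separates `S`:
it misses `S` and `S` meets both open half-spaces. -/
def SeparatesHyp {E : Type*} [AddCommGroup E] [Module ℝ E]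
    (φ : E →ₗ[ℝ] ℝ) (c : ℝ) (S : Set E) : Prop :=
  φ ≠ 0 ∧ (∀ x ∈ S, φ x ≠ c) ∧ (∃ x ∈ S, φ x < c) ∧ (∃ x ∈ S, c < φ x)

/-- A set is strongly disconnected if some hyperplane separates it. -/
def StronglyDisconnected {E : Type*} [AddCommGroup E] [Module ℝ E] (S : Set E) : Prop :=
  ∃ (φ : E →ₗ[ℝ] ℝ) (c : ℝ), SeparatesHyp φ c S

/-- A set is weakly connected if no hyperplane separates it. -/
def WeaklyConnected {E : Type*} [AddCommGroup E] [Module ℝ E] (S : Set E) : Prop :=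
  ¬ StronglyDisconnected S

/-- A weak component of a compact set `S` is a maximal weakly connected compact subset of `S`. -/
def IsWeakComponent {E : Type*} [NormedAddCommGroup E] [NormedSpace ℝ E]
    (S C : Set E) : Prop :=
  C.Nonempty ∧ C ⊆ S ∧ IsCompact C ∧ WeaklyConnected C ∧
    ∀ C' : Set E, C' ⊆ S → IsCompact C' → WeaklyConnected C' → C ⊆ C' → C' = C

/-- A (nondegenerate right circular) cone with apex `x`, axis direction `v`, radius `r` and
half-angle `θ`. -/
def coneSet {E : Type*} [NormedAddCommGroup E] [InnerProductSpace ℝ E]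
    (x v : E) (r θ : ℝ) : Set E :=
  {y | ‖y - x‖ ≤ r ∧ ‖y - x‖ * Real.cos θ ≤ ⟪y - x, v⟫}

/-- A boundary point `x` of `K` is a cusp of `K` if no cone with apex `x` is contained in `K`. -/
def IsConeCusp {E : Type*} [NormedAddCommGroup E] [InnerProductSpace ℝ E]
    (K : Set E) (x : E) : Prop :=
  x ∈ frontier K ∧ ∀ (v : E) (r θ : ℝ), ‖v‖ = 1 → 0 < r → 0 < θ → θ < Real.pi / 2 →
    ¬ coneSet x v r θ ⊆ K

/-- The one-parameter family is tame: whenever the attractor `A_t` has nonempty interior,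
some fixed point of a map of `F_t` is not a cusp of `A_t`. -/
def TameFamily {E : Type*} [NormedAddCommGroup E] [InnerProductSpace ℝ E] {N : ℕ}
    (L : Fin N → E →L[ℝ] E) (a q : Fin N → E) : Prop :=
  ∀ t : ℝ, 0 ≤ t → t < 1 / jsr L → ∀ A : Set E, IsAttractor (fam L a q t) A →
    (interior A).Nonempty → ∃ (i : Fin N) (x : E), fam L a q t i x = x ∧ ¬ IsConeCusp A x

end


noncomputable section AuxStmt8

variable {E : Type*} [NormedAddCommGroup E] [NormedSpace ℝ E] {N : ℕ} [NeZero N]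

/-- Coefficients of the formal fixed-point power series of the family. -/
def dd (L : Fin N → E →L[ℝ] E) (a q : Fin N → E) : ℕ → Fin N → E
  | 0 => q
  | k + 1 => fun i => L i (dd L a q k 0) + if k = 0 then a i else 0

lemma mem_hutch {ι F : Type*} (f : ι → F → F) {S : Set F} {y : F} (i : ι) (hy : y ∈ S) :
    f i y ∈ hutch f S :=
  Set.mem_iUnion.2 ⟨i, ⟨y, hy, rfl⟩⟩

lemma key_identity (L : Fin N → E →L[ℝ] E) (a q : Fin N → E) :
    ∀ k : ℕ, (∀ m, m < k → ∀ i, dd L a q m i = dd L a q m 0) →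
      ∀ (t : ℝ) (i : Fin N) (x : E),
      fam L a q t i x = (∑ m ∈ Finset.range k, t ^ m • dd L a q m 0)
        + t ^ k • dd L a q k i
        + t • (L i (x - ∑ m ∈ Finset.range k, t ^ m • dd L a q m 0)
               + if k = 0 then a i else 0) := by
  intro k
  induction k with
  | zero =>
    intro _ t i x
    simp only [Finset.range_zero, Finset.sum_empty, pow_zero, sub_zero, one_smul, zero_add,
      if_true, dd, fam]
    abel
  | succ k IH =>
    intro H t i x
    have Hk : ∀ m, m < k → ∀ i, dd L a q m i = dd L a q m 0 :=
      fun m hm => H m (hm.trans (Nat.lt_succ_self k))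
    have hdk : dd L a q k i = dd L a q k 0 := H k (Nat.lt_succ_self k) i
    have hstep : dd L a q (k + 1) i = L i (dd L a q k 0) + if k = 0 then a i else 0 := rfl
    rw [IH Hk t i x, hdk, Finset.sum_range_succ, hstep]
    simp only [Nat.succ_ne_zero, if_false, map_sub, map_add, map_smul, add_zero]
    by_cases hk0 : k = 0
    · subst hk0
      simp only [if_pos rfl, pow_zero, pow_one, one_smul, zero_add, Finset.range_zero,
        Finset.sum_empty, map_zero]
      module
    · simp only [if_neg hk0, add_zero]
      module

lemma dd_norm_bound (L : Fin N → E →L[ℝ] E) (a q : Fin N → E) (k : ℕ) :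
    ‖dd L a q k 0‖ ≤ (∑ j, ‖L j‖ + ∑ j, ‖a j‖ + ‖q 0‖ + 1) ^ (k + 1) := by
  set G : ℝ := ∑ j, ‖L j‖ + ∑ j, ‖a j‖ + ‖q 0‖ + 1 with hG
  have hCnn : (0:ℝ) ≤ ∑ j, ‖L j‖ := Finset.sum_nonneg fun _ _ => norm_nonneg _
  have hEAnn : (0:ℝ) ≤ ∑ j, ‖a j‖ := Finset.sum_nonneg fun _ _ => norm_nonneg _
  have hG1 : (1:ℝ) ≤ G := by have := norm_nonneg (q 0); nlinarith
  induction k with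
  | zero =>
    have : ‖dd L a q 0 0‖ = ‖q 0‖ := rfl
    rw [this, pow_one]
    nlinarith
  | succ k IH =>
    have hpow1 : (1:ℝ) ≤ G ^ (k + 1) := one_le_pow₀ hG1
    have hL0 : ‖L 0‖ ≤ ∑ j, ‖L j‖ :=
      Finset.single_le_sum (fun j _ => norm_nonneg (L j)) (Finset.mem_univ 0)
    have ha0 : ‖if k = 0 then a (0 : Fin N) else 0‖ ≤ ∑ j, ‖a j‖ := by
      by_cases hk : k = 0
      · simp only [if_pos hk]
        exact Finset.single_le_sum (fun j _ => norm_nonneg (a j)) (Finset.mem_univ 0)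
      · simp only [if_neg hk, norm_zero]; exact hEAnn
    have hd : dd L a q (k + 1) 0 = L 0 (dd L a q k 0) + if k = 0 then a 0 else 0 := rfl
    have hdn : ‖dd L a q (k + 1) 0‖ ≤ (∑ j, ‖L j‖) * ‖dd L a q k 0‖ + ∑ j, ‖a j‖ := by
      rw [hd]
      refine (norm_add_le _ _).trans (add_le_add ?_ ha0)
      exact ((L 0).le_opNorm _).trans (mul_le_mul_of_nonneg_right hL0 (norm_nonneg _))
    have hdk : 0 ≤ ‖dd L a q k 0‖ := norm_nonneg _
    calc ‖dd L a q (k + 1) 0‖ ≤ (∑ j, ‖L j‖) * ‖dd L a q k 0‖ + ∑ j, ‖a j‖ := hdn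
      _ ≤ (∑ j, ‖L j‖) * G ^ (k + 1) + (∑ j, ‖a j‖) * G ^ (k + 1) := by
          refine add_le_add (mul_le_mul_of_nonneg_left IH hCnn) ?_
          nlinarith
      _ ≤ G * G ^ (k + 1) := by
          have := norm_nonneg (q 0); nlinarith
      _ = G ^ (k + 1 + 1) := by ring

lemma branchA [CompleteSpace E] (L : Fin N → E →L[ℝ] E) (a q : Fin N → E)
    (hall : ∀ (k : ℕ) (i : Fin N), dd L a q k i = dd L a q k 0)
    {t : ℝ} (ht0 : 0 < t)
    (htG : t * (∑ j, ‖L j‖ + ∑ j, ‖a j‖ + ‖q 0‖ + 1) < 1) :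
    ∃ p : E, ∀ i : Fin N, fam L a q t i p = p := by
  set G : ℝ := ∑ j, ‖L j‖ + ∑ j, ‖a j‖ + ‖q 0‖ + 1 with hG
  have hCnn : (0:ℝ) ≤ ∑ j, ‖L j‖ := Finset.sum_nonneg fun _ _ => norm_nonneg _
  have hEAnn : (0:ℝ) ≤ ∑ j, ‖a j‖ := Finset.sum_nonneg fun _ _ => norm_nonneg _
  have hG1 : (1:ℝ) ≤ G := by have := norm_nonneg (q 0); nlinarith
  have hGpos : (0:ℝ) < G := lt_of_lt_of_le one_pos hG1
  have htG0 : 0 ≤ t * G := by positivity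
  have hgeo : Summable fun k : ℕ => G * G * (t * G) ^ k :=
    (summable_geometric_of_lt_one htG0 htG).mul_left _
  have hsum1 : Summable fun k : ℕ => t ^ k • dd L a q k 0 := by
    refine Summable.of_norm_bounded hgeo fun k => ?_
    rw [norm_smul, norm_pow, Real.norm_eq_abs, abs_of_pos ht0]
    calc t ^ k * ‖dd L a q k 0‖ ≤ t ^ k * G ^ (k + 1) := by
          exact mul_le_mul_of_nonneg_left (dd_norm_bound L a q k) (by positivity)
      _ = G * (t * G) ^ k := by rw [mul_pow, pow_succ]; ring
      _ ≤ G * G * (t * G) ^ k := by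
          nlinarith [mul_nonneg (mul_nonneg hGpos.le (sub_nonneg.2 hG1)) (pow_nonneg htG0 k)]
  have hsum2 : Summable fun k : ℕ => t ^ k • dd L a q (k + 1) 0 := by
    refine Summable.of_norm_bounded ((hgeo.mul_left G)) fun k => ?_
    rw [norm_smul, norm_pow, Real.norm_eq_abs, abs_of_pos ht0]
    calc t ^ k * ‖dd L a q (k + 1) 0‖ ≤ t ^ k * G ^ (k + 2) := by
          exact mul_le_mul_of_nonneg_left (dd_norm_bound L a q (k + 1)) (by positivity)
      _ = G * G * (t * G) ^ k := by rw [mul_pow]; ring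
      _ ≤ G * (G * G * (t * G) ^ k) := by
          nlinarith [mul_nonneg (mul_nonneg (mul_nonneg hGpos.le hGpos.le) (sub_nonneg.2 hG1))
            (pow_nonneg htG0 k)]
  set p : E := ∑' k : ℕ, t ^ k • dd L a q k 0 with hp
  refine ⟨p, fun i => ?_⟩
  have hsum3 : Summable fun k : ℕ => t ^ k • (if k = 0 then a i else 0 : E) := by
    refine summable_of_ne_finset_zero (s := {0}) fun k hk => ?_
    simp only [Finset.mem_singleton] at hk
    simp [if_neg hk]
  have htsum3 : ∑' k : ℕ, t ^ k • (if k = 0 then a i else 0 : E) = a i := by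
    rw [tsum_eq_single 0 (fun k hk => by simp [if_neg hk])]
    simp
  have hLp : L i p = (∑' k : ℕ, t ^ k • dd L a q (k + 1) 0) - a i := by
    rw [hp, ContinuousLinearMap.map_tsum _ hsum1]
    have hterm : ∀ k : ℕ, L i (t ^ k • dd L a q k 0)
        = t ^ k • dd L a q (k + 1) 0 - t ^ k • (if k = 0 then a i else 0 : E) := by
      intro k
      have h1 : dd L a q (k + 1) i = L i (dd L a q k 0) + if k = 0 then a i else 0 := rfl
      have h2 : L i (dd L a q k 0) = dd L a q (k + 1) 0 - if k = 0 then a i else 0 := by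
        rw [← hall (k + 1) i, h1]; abel
      rw [map_smul, h2, smul_sub]
    calc ∑' k : ℕ, L i (t ^ k • dd L a q k 0)
        = ∑' k : ℕ, (t ^ k • dd L a q (k + 1) 0 - t ^ k • (if k = 0 then a i else 0 : E)) := by
          exact tsum_congr hterm
      _ = (∑' k : ℕ, t ^ k • dd L a q (k + 1) 0) - a i := by
          rw [Summable.tsum_sub hsum2 hsum3, htsum3]
  have hps : p = q 0 + t • ∑' k : ℕ, t ^ k • dd L a q (k + 1) 0 := by
    rw [hp, Summable.tsum_eq_zero_add hsum1, ← Summable.tsum_const_smul (t : ℝ) hsum2]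
    have h0 : (t : ℝ) ^ 0 • dd L a q 0 0 = q 0 := by
      simp [dd]
    rw [h0]
    congr 1
    refine tsum_congr fun k => ?_
    rw [smul_smul, ← pow_succ']
  have hq : q i = q 0 := hall 0 i
  show t • (L i p + a i) + q i = p
  rw [hLp, hq]
  rw [hps]
  module

end AuxStmt8

set_option maxHeartbeats 1600000 in
/-- For a one-parameter affine family on `ℝ^d` that is not quasi-linear,
there is `τ > 0` such that for every `t ∈ (0, τ)` at which the maps `f_{(i,t)}` do not all
have a common fixed point, the attractor `A_t` is not connected. -/
theorem stmt8 {d N : ℕ} (hN : 2 ≤ N)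
    (L : Fin N → EuclideanSpace ℝ (Fin d) →L[ℝ] EuclideanSpace ℝ (Fin d))
    (hL : ∀ i, Function.Bijective (L i))
    (a q : Fin N → EuclideanSpace ℝ (Fin d))
    (hρ : 0 < jsr L)
    (hql : ¬ IsQuasiLinearFamily L a q) :
    ∃ τ : ℝ, 0 < τ ∧
      ∀ t : ℝ, 0 < t → t < τ →
        (¬ ∃ p : EuclideanSpace ℝ (Fin d), ∀ i : Fin N, fam L a q t i p = p) →
        ∀ A : Set (EuclideanSpace ℝ (Fin d)), IsAttractor (fam L a q t) A →
          ¬ IsConnected A := by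
  classical
  haveI : NeZero N := ⟨by omega⟩
  by_cases hall : ∀ (k : ℕ) (i : Fin N), dd L a q k i = dd L a q k 0
  · -- the formal power series gives a common fixed point for all small `t`; vacuous case
    set G : ℝ := ∑ j, ‖L j‖ + ∑ j, ‖a j‖ + ‖q 0‖ + 1 with hG
    have hCnn : (0:ℝ) ≤ ∑ j, ‖L j‖ := Finset.sum_nonneg fun _ _ => norm_nonneg _
    have hEAnn : (0:ℝ) ≤ ∑ j, ‖a j‖ := Finset.sum_nonneg fun _ _ => norm_nonneg _
    have hG1 : (1:ℝ) ≤ G := by have := norm_nonneg (q 0); nlinarith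
    have hGpos : (0:ℝ) < G := lt_of_lt_of_le one_pos hG1
    refine ⟨1 / G, by positivity, fun t ht0 htau hnofix A hA => ?_⟩
    exact absurd (branchA L a q hall ht0 ((lt_div_iff₀ hGpos).1 htau)) hnofix
  · push_neg at hall
    have hex : ∃ k : ℕ, ∃ i : Fin N, dd L a q k i ≠ dd L a q k 0 := hall
    set k : ℕ := Nat.find hex with hkdef
    obtain ⟨j0, hj0⟩ := Nat.find_spec hex
    have Hmin : ∀ m, m < k → ∀ i, dd L a q m i = dd L a q m 0 := by
      intro m hm i
      by_contra h
      exact Nat.find_min hex hm ⟨i, h⟩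
    set C : ℝ := ∑ j, ‖L j‖ with hC
    set EA : ℝ := ∑ j, ‖a j‖ with hEA
    set B : ℝ := 1 + ∑ j, ‖dd L a q k j‖ with hB
    have hCnn : (0:ℝ) ≤ C := Finset.sum_nonneg fun _ _ => norm_nonneg _
    have hEAnn : (0:ℝ) ≤ EA := Finset.sum_nonneg fun _ _ => norm_nonneg _
    have hBpos : (0:ℝ) < B := by
      have : (0:ℝ) ≤ ∑ j, ‖dd L a q k j‖ := Finset.sum_nonneg fun _ _ => norm_nonneg _
      rw [hB]; linarith
    have hBge : ∀ i : Fin N, ‖dd L a q k i‖ ≤ B := by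
      intro i
      have h1 : ‖dd L a q k i‖ ≤ ∑ j, ‖dd L a q k j‖ :=
        Finset.single_le_sum (fun j _ => norm_nonneg _) (Finset.mem_univ i)
      rw [hB]; linarith
    have hCge : ∀ i : Fin N, ‖L i‖ ≤ C :=
      fun i => Finset.single_le_sum (fun j _ => norm_nonneg (L j)) (Finset.mem_univ i)
    set T : Finset (Fin N) := Finset.univ.filter (fun i => dd L a q k i ≠ dd L a q k 0) with hT
    have hTne : T.Nonempty := ⟨j0, by simp [hT]; exact hj0⟩
    set D : ℝ := T.inf' hTne (fun i => ‖dd L a q k i - dd L a q k 0‖) with hD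
    have hDpos : (0:ℝ) < D := by
      rw [hD, Finset.lt_inf'_iff]
      intro i hi
      rw [hT, Finset.mem_filter] at hi
      exact norm_pos_iff.2 (sub_ne_zero.2 hi.2)
    have hDle : ∀ i : Fin N, dd L a q k i ≠ dd L a q k 0 → D ≤ ‖dd L a q k i - dd L a q k 0‖ := by
      intro i hi
      exact Finset.inf'_le _ (by simp [hT, hi])
    set Lam : ℝ := 2 * C * B + EA + 1 with hLam
    have hLampos : (0:ℝ) < Lam := by rw [hLam]; nlinarith
    refine ⟨min (B / Lam) (D / (8 * Lam)),
      lt_min (div_pos hBpos hLampos) (div_pos hDpos (by linarith)), ?_⟩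
    intro t ht0 htau hnofix A hA hconn
    have htB : t * Lam < B :=
      (lt_div_iff₀ hLampos).1 (lt_of_lt_of_le htau (min_le_left _ _))
    have htD8 : t * (8 * Lam) < D :=
      (lt_div_iff₀ (by linarith)).1 (lt_of_lt_of_le htau (min_le_right _ _))
    have h2CB : (0:ℝ) ≤ 2 * C * B := mul_nonneg (by linarith) hBpos.le
    set ε : ℝ := t * (2 * C * B + EA) with hε
    have hεnn : (0:ℝ) ≤ ε := by rw [hε]; exact mul_nonneg ht0.le (by linarith)
    have hεLam : ε ≤ t * Lam := by
      rw [hε, hLam]; exact mul_le_mul_of_nonneg_left (by linarith) ht0.le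
    have hεB : ε < B := lt_of_le_of_lt hεLam htB
    have hεD : ε < D / 8 := lt_of_le_of_lt hεLam (by nlinarith)
    set P : EuclideanSpace ℝ (Fin d) := ∑ m ∈ Finset.range k, t ^ m • dd L a q m 0 with hP
    set z : Fin N → EuclideanSpace ℝ (Fin d) := fun i => P + t ^ k • dd L a q k i with hz
    have keyid : ∀ (i : Fin N) (x : EuclideanSpace ℝ (Fin d)),
        fam L a q t i x = P + t ^ k • dd L a q k i
          + t • (L i (x - P) + if k = 0 then a i else 0) :=
      fun i x => key_identity L a q k Hmin t i x
    have htk : (0:ℝ) < t ^ k := pow_pos ht0 k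
    have hXD : (0:ℝ) < t ^ k * D := mul_pos htk hDpos
    have hzP : ∀ i : Fin N, z i - P = t ^ k • dd L a q k i := by
      intro i; simp only [hz]; abel
    have hzPn : ∀ i : Fin N, ‖z i - P‖ ≤ t ^ k * B := by
      intro i
      rw [hzP i, norm_smul, norm_pow, Real.norm_eq_abs, abs_of_pos ht0]
      exact mul_le_mul_of_nonneg_left (hBge i) htk.le
    have he : ∀ i : Fin N, ‖(if k = 0 then a i else 0 : EuclideanSpace ℝ (Fin d))‖ ≤ EA * t ^ k := by
      intro i
      by_cases hk : k = 0
      · rw [if_pos hk, hk, pow_zero, mul_one]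
        exact Finset.single_le_sum (fun j _ => norm_nonneg (a j)) (Finset.mem_univ i)
      · simp only [if_neg hk, norm_zero]
        positivity
    -- the basic contraction-type estimate
    have hest : ∀ (i : Fin N) (y : EuclideanSpace ℝ (Fin d)), ‖y - P‖ ≤ 2 * (t ^ k * B) →
        ‖fam L a q t i y - z i‖ ≤ t ^ k * ε := by
      intro i y hy
      have h1 : fam L a q t i y - z i = t • (L i (y - P) + if k = 0 then a i else 0) := by
        rw [keyid i y]; simp only [hz]; abel
      rw [h1, norm_smul, Real.norm_eq_abs, abs_of_pos ht0]
      have h2 : ‖L i (y - P) + if k = 0 then a i else 0‖ ≤ C * (2 * (t ^ k * B)) + EA * t ^ k := by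
        refine (norm_add_le _ _).trans (add_le_add ?_ (he i))
        refine ((L i).le_opNorm _).trans ?_
        have := norm_nonneg (y - P)
        nlinarith [hCge i]
      calc t * ‖L i (y - P) + if k = 0 then a i else 0‖
          ≤ t * (C * (2 * (t ^ k * B)) + EA * t ^ k) :=
            mul_le_mul_of_nonneg_left h2 ht0.le
        _ = t ^ k * ε := by rw [hε]; ring
    have hbnd : ∀ (i : Fin N) (y : EuclideanSpace ℝ (Fin d)), ‖y - P‖ ≤ 2 * (t ^ k * B) →
        ‖fam L a q t i y - P‖ ≤ 2 * (t ^ k * B) := by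
      intro i y hy
      calc ‖fam L a q t i y - P‖ ≤ ‖fam L a q t i y - z i‖ + ‖z i - P‖ := by
            have : fam L a q t i y - P = (fam L a q t i y - z i) + (z i - P) := by abel
            rw [this]; exact norm_add_le _ _
        _ ≤ t ^ k * ε + t ^ k * B := add_le_add (hest i y hy) (hzPn i)
        _ ≤ 2 * (t ^ k * B) := by
            have := mul_le_mul_of_nonneg_left hεB.le htk.le
            linarith
    -- iterates of the Hutchinson operator on the singleton {P}
    set Fn : ℕ → Set (EuclideanSpace ℝ (Fin d)) :=
      fun n => (hutch (fam L a q t))^[n] {P} with hFn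
    have hFn_succ : ∀ n : ℕ, Fn (n + 1) = hutch (fam L a q t) (Fn n) :=
      fun n => Function.iterate_succ_apply' _ _ _
    have hFn_ne : ∀ n : ℕ, (Fn n).Nonempty := by
      intro n
      induction n with
      | zero => exact ⟨P, rfl⟩
      | succ n IH =>
        obtain ⟨y, hy⟩ := IH
        exact ⟨fam L a q t 0 y, (hFn_succ n) ▸ mem_hutch _ 0 hy⟩
    have hFn_bd : ∀ n : ℕ, ∀ y ∈ Fn n, ‖y - P‖ ≤ 2 * (t ^ k * B) := by
      intro n
      induction n with
      | zero =>
        intro y hy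
        rw [Set.mem_singleton_iff.1 hy]
        simp only [sub_self, norm_zero]
        positivity
      | succ n IH =>
        intro y hy
        rw [hFn_succ n] at hy
        obtain ⟨i, y', hy', rfl⟩ := Set.mem_iUnion.1 hy
        exact hbnd i y' (IH y' hy')
    have hFn_near : ∀ n : ℕ, ∀ y ∈ Fn (n + 1), ∃ i : Fin N, ‖y - z i‖ ≤ t ^ k * ε := by
      intro n y hy
      rw [hFn_succ n] at hy
      obtain ⟨i, y', hy', rfl⟩ := Set.mem_iUnion.1 hy
      exact ⟨i, hest i y' (hFn_bd n y' hy')⟩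
    have hFn_bdd : ∀ n : ℕ, Bornology.IsBounded (Fn n) := by
      intro n
      refine (Metric.isBounded_closedBall (x := P) (r := 2 * (t ^ k * B))).subset ?_
      intro y hy
      rw [Metric.mem_closedBall, dist_eq_norm]
      exact hFn_bd n y hy
    have hedist : ∀ n : ℕ, EMetric.hausdorffEdist A (Fn n) ≠ ⊤ :=
      fun n => Metric.hausdorffEdist_ne_top_of_nonempty_of_bounded hA.1 (hFn_ne n)
        hA.2.1.isBounded (hFn_bdd n)
    have htendsto : Tendsto (fun n : ℕ => hausdorffDist (Fn n) A) atTop (nhds 0) :=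
      hA.2.2 {P} ⟨P, rfl⟩ isCompact_singleton
    -- `A` is contained in the union of small balls around the `z i`
    set W : Set (EuclideanSpace ℝ (Fin d)) :=
      ⋃ i : Fin N, Metric.closedBall (z i) (t ^ k * ε) with hW
    have hWclosed : IsClosed W := isClosed_iUnion_of_finite fun i => Metric.isClosed_closedBall
    have hWne : W.Nonempty :=
      ⟨z 0, Set.mem_iUnion.2 ⟨0, Metric.mem_closedBall_self (mul_nonneg htk.le hεnn)⟩⟩
    have hFnW : ∀ n : ℕ, Fn (n + 1) ⊆ W := by
      intro n y hy
      obtain ⟨i, hi⟩ := hFn_near n y hy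
      exact Set.mem_iUnion.2 ⟨i, by rwa [Metric.mem_closedBall, dist_eq_norm]⟩
    have hAW : A ⊆ W := by
      intro x hx
      have h0 : infDist x W ≤ 0 := by
        refine ge_of_tendsto htendsto ?_
        refine eventually_atTop.2 ⟨1, fun n hn => ?_⟩
        obtain ⟨m, rfl⟩ := Nat.exists_eq_add_of_le hn
        have h2 : infDist x (Fn (1 + m)) ≤ hausdorffDist A (Fn (1 + m)) :=
          Metric.infDist_le_hausdorffDist_of_mem hx (hedist (1 + m))
        have h3 : infDist x W ≤ infDist x (Fn (1 + m)) := by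
          have : Fn (1 + m) ⊆ W := by rw [Nat.add_comm 1 m]; exact hFnW m
          exact Metric.infDist_le_infDist_of_subset this (hFn_ne _)
        rw [Metric.hausdorffDist_comm] at h2
        linarith
      exact (hWclosed.mem_iff_infDist_zero hWne).2 (le_antisymm h0 Metric.infDist_nonneg)
    -- the separating sphere
    set r : ℝ := t ^ k * (D / 2) with hr
    set U : Set (EuclideanSpace ℝ (Fin d)) := Metric.ball (z 0) r with hU
    set V : Set (EuclideanSpace ℝ (Fin d)) := {x | r < dist x (z 0)} with hV
    have hUopen : IsOpen U := Metric.isOpen_ball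
    have hVopen : IsOpen V :=
      isOpen_lt continuous_const (Continuous.dist continuous_id continuous_const)
    have hzz : ∀ i : Fin N, dist (z i) (z 0) = t ^ k * ‖dd L a q k i - dd L a q k 0‖ := by
      intro i
      rw [dist_eq_norm]
      have h1 : z i - z 0 = t ^ k • (dd L a q k i - dd L a q k 0) := by
        simp only [hz, smul_sub]; abel
      rw [h1, norm_smul, norm_pow, Real.norm_eq_abs, abs_of_pos ht0]
    have hAUV : A ⊆ U ∪ V := by
      intro x hx
      obtain ⟨i, hi⟩ := Set.mem_iUnion.1 (hAW hx)
      rw [Metric.mem_closedBall] at hi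
      by_cases hi0 : dd L a q k i = dd L a q k 0
      · left
        rw [hU, Metric.mem_ball]
        have hzi : z i = z 0 := by simp only [hz, hi0]
        rw [← hzi]
        calc dist x (z i) ≤ t ^ k * ε := hi
          _ < t ^ k * (D / 2) := by
              have := mul_lt_mul_of_pos_left hεD htk
              linarith
      · right
        rw [hV, Set.mem_setOf_eq]
        have h1 : t ^ k * D ≤ dist (z i) (z 0) := by
          rw [hzz i]
          exact mul_le_mul_of_nonneg_left (hDle i hi0) htk.le
        have h2 : dist (z i) (z 0) ≤ dist x (z i) + dist x (z 0) := by
          rw [dist_comm x (z i)]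
          exact dist_triangle _ _ _
        rw [hr]
        have := mul_lt_mul_of_pos_left hεD htk
        linarith
    -- points of `A` close to `z 0` and to `z j0`
    have hr8 : (0:ℝ) < t ^ k * (D / 8) := by positivity
    obtain ⟨n1, hn1⟩ := eventually_atTop.1 (htendsto.eventually (gt_mem_nhds hr8))
    have hpoint : ∀ j : Fin N, ∃ aj ∈ A, dist aj (z j) < t ^ k * ε + t ^ k * (D / 8) := by
      intro j
      obtain ⟨y, hy⟩ := hFn_ne n1
      have hw : fam L a q t j y ∈ Fn (n1 + 1) := (hFn_succ n1) ▸ mem_hutch _ j hy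
      have hwz : dist (fam L a q t j y) (z j) ≤ t ^ k * ε := by
        rw [dist_eq_norm]
        exact hest j y (hFn_bd n1 y hy)
      have hedist' : EMetric.hausdorffEdist (Fn (n1 + 1)) A ≠ ⊤ := by
        rw [show EMetric.hausdorffEdist (Fn (n1 + 1)) A = EMetric.hausdorffEdist A (Fn (n1 + 1)) from EMetric.hausdorffEdist_comm]; exact hedist (n1 + 1)
      have hinf : infDist (fam L a q t j y) A < t ^ k * (D / 8) :=
        lt_of_le_of_lt (Metric.infDist_le_hausdorffDist_of_mem hw hedist')
          (hn1 (n1 + 1) (Nat.le_succ n1))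
      obtain ⟨aj, hajA, haj⟩ := (Metric.infDist_lt_iff hA.1).1 hinf
      refine ⟨aj, hajA, ?_⟩
      calc dist aj (z j) ≤ dist aj (fam L a q t j y) + dist (fam L a q t j y) (z j) :=
            dist_triangle _ _ _
        _ < t ^ k * (D / 8) + t ^ k * ε := by rw [dist_comm] at haj; linarith
        _ = t ^ k * ε + t ^ k * (D / 8) := by ring
    obtain ⟨aU, haUA, haUd⟩ := hpoint 0
    obtain ⟨aV, haVA, haVd⟩ := hpoint j0
    have haUmem : aU ∈ U := by
      rw [hU, Metric.mem_ball, hr]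
      have := mul_lt_mul_of_pos_left hεD htk
      linarith
    have haVmem : aV ∈ V := by
      rw [hV, Set.mem_setOf_eq, hr]
      have h1 : t ^ k * D ≤ dist (z j0) (z 0) := by
        rw [hzz j0]
        exact mul_le_mul_of_nonneg_left (hDle j0 hj0) htk.le
      have h2 : dist (z j0) (z 0) ≤ dist aV (z j0) + dist aV (z 0) := by
        rw [dist_comm aV (z j0)]
        exact dist_triangle _ _ _
      have := mul_lt_mul_of_pos_left hεD htk
      linarith
    obtain ⟨x, hxA, hxU, hxV⟩ := hconn.isPreconnected U V hUopen hVopen hAUV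
      ⟨aU, haUA, haUmem⟩ ⟨aV, haVA, haVmem⟩
    rw [hU, Metric.mem_ball] at hxU
    rw [hV, Set.mem_setOf_eq] at hxV
    linarith
end

section
/- For every nonempty compact set S ⊆ ℝ^d, the set of weak components of S forms a partition of S: the weak components are pairwise disjoint and their union is S. -/
open Metric Filter Set
open scoped RealInnerProductSpace

section Aux

variable {d : ℕ}

local notation "E" => EuclideanSpace ℝ (Fin d)

/-- A nonempty weakly connected set avoiding `φ = c` lies entirely on one side. -/
lemma wc_one_side {T : Set E} (hT : WeaklyConnected T)
    (φ : E →ₗ[ℝ] ℝ) (c : ℝ) (hφ : φ ≠ 0) (havoid : ∀ x ∈ T, φ x ≠ c) :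
    (∀ x ∈ T, φ x < c) ∨ (∀ x ∈ T, c < φ x) := by
  by_contra h
  push_neg at h
  obtain ⟨⟨p, hp, hpc⟩, ⟨q, hq, hqc⟩⟩ := h
  exact hT ⟨φ, c, hφ, havoid,
    ⟨q, hq, lt_of_le_of_ne hqc (havoid q hq)⟩,
    ⟨p, hp, lt_of_le_of_ne hpc fun h' => havoid p hp h'.symm⟩⟩

lemma wc_singleton (x : E) : WeaklyConnected ({x} : Set E) := by
  rintro ⟨φ, c, _, _, ⟨p, hp, hpc⟩, ⟨q, hq, hqc⟩⟩
  rw [Set.mem_singleton_iff] at hp hq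
  subst hp; subst hq
  exact absurd hqc (not_lt.mpr hpc.le)

lemma wc_union {T₁ T₂ : Set E} (h₁ : WeaklyConnected T₁) (h₂ : WeaklyConnected T₂)
    (hne : (T₁ ∩ T₂).Nonempty) : WeaklyConnected (T₁ ∪ T₂) := by
  rintro ⟨φ, c, hφ, havoid, ⟨p, hp, hpc⟩, ⟨q, hq, hqc⟩⟩
  obtain ⟨z, hz₁, hz₂⟩ := hne
  have hav₁ : ∀ x ∈ T₁, φ x ≠ c := fun x hx => havoid x (Or.inl hx)
  have hav₂ : ∀ x ∈ T₂, φ x ≠ c := fun x hx => havoid x (Or.inr hx)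
  rcases wc_one_side h₁ φ c hφ hav₁ with H₁ | H₁ <;>
    rcases wc_one_side h₂ φ c hφ hav₂ with H₂ | H₂
  · rcases hq with hq | hq
    · exact absurd hqc (not_lt.mpr (H₁ q hq).le)
    · exact absurd hqc (not_lt.mpr (H₂ q hq).le)
  · exact absurd (H₂ z hz₂) (not_lt.mpr (H₁ z hz₁).le)
  · exact absurd (H₁ z hz₁) (not_lt.mpr (H₂ z hz₂).le)
  · rcases hp with hp | hp
    · exact absurd hpc (not_lt.mpr (H₁ p hp).le)
    · exact absurd hpc (not_lt.mpr (H₂ p hp).le)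

lemma wc_closure {T : Set E} (hT : WeaklyConnected T) : WeaklyConnected (closure T) := by
  rintro ⟨φ, c, hφ, havoid, ⟨p, hp, hpc⟩, ⟨q, hq, hqc⟩⟩
  have hcont : Continuous φ := φ.continuous_of_finiteDimensional
  have hopen₁ : IsOpen {x : E | φ x < c} := isOpen_lt hcont continuous_const
  have hopen₂ : IsOpen {x : E | c < φ x} := isOpen_lt continuous_const hcont
  obtain ⟨p', hp', hp'T⟩ := mem_closure_iff.mp hp _ hopen₁ hpc
  obtain ⟨q', hq', hq'T⟩ := mem_closure_iff.mp hq _ hopen₂ hqc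
  exact hT ⟨φ, c, hφ, fun x hx => havoid x (subset_closure hx),
    ⟨p', hp'T, hp'⟩, ⟨q', hq'T, hq'⟩⟩

lemma wc_sUnion_chain {𝒞 : Set (Set E)} (hchain : IsChain (· ⊆ ·) 𝒞)
    (h : ∀ T ∈ 𝒞, WeaklyConnected T) : WeaklyConnected (⋃₀ 𝒞) := by
  rintro ⟨φ, c, hφ, havoid, ⟨p, hp, hpc⟩, ⟨q, hq, hqc⟩⟩
  obtain ⟨T₁, hT₁, hpT₁⟩ := hp
  obtain ⟨T₂, hT₂, hqT₂⟩ := hq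
  rcases hchain.total hT₁ hT₂ with hsub | hsub
  · exact h T₂ hT₂ ⟨φ, c, hφ, fun x hx => havoid x ⟨T₂, hT₂, hx⟩,
      ⟨p, hsub hpT₁, hpc⟩, ⟨q, hqT₂, hqc⟩⟩
  · exact h T₁ hT₁ ⟨φ, c, hφ, fun x hx => havoid x ⟨T₁, hT₁, hx⟩,
      ⟨p, hpT₁, hpc⟩, ⟨q, hsub hqT₂, hqc⟩⟩

end Aux

/-- For every nonempty compact set `S ⊆ ℝ^d`, the weak components of `S`
form a partition of `S`: they are pairwise disjoint and their union is `S`. -/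
theorem stmt9 {d : ℕ} (S : Set (EuclideanSpace ℝ (Fin d)))
    (hS : S.Nonempty) (hSc : IsCompact S) :
    (∀ C₁ C₂ : Set (EuclideanSpace ℝ (Fin d)),
      IsWeakComponent S C₁ → IsWeakComponent S C₂ → C₁ ≠ C₂ → Disjoint C₁ C₂) ∧
    ⋃₀ {C : Set (EuclideanSpace ℝ (Fin d)) | IsWeakComponent S C} = S := by
  constructor
  · rintro C₁ C₂ ⟨hne₁, hsub₁, hcpt₁, hwc₁, hmax₁⟩ ⟨hne₂, hsub₂, hcpt₂, hwc₂, hmax₂⟩ hne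
    rw [Set.disjoint_iff_inter_eq_empty]
    by_contra h
    have hint : (C₁ ∩ C₂).Nonempty := Set.nonempty_iff_ne_empty.mpr h
    have hwcU := wc_union hwc₁ hwc₂ hint
    have hU : C₁ ∪ C₂ ⊆ S := Set.union_subset hsub₁ hsub₂
    have hUc : IsCompact (C₁ ∪ C₂) := hcpt₁.union hcpt₂
    have e₁ : C₁ ∪ C₂ = C₁ := hmax₁ _ hU hUc hwcU Set.subset_union_left
    have e₂ : C₁ ∪ C₂ = C₂ := hmax₂ _ hU hUc hwcU Set.subset_union_right
    exact hne (e₁ ▸ e₂)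
  · apply Set.Subset.antisymm
    · rintro x ⟨C, hC, hxC⟩
      exact hC.2.1 hxC
    · intro x hx
      set P : Set (Set (EuclideanSpace ℝ (Fin d))) :=
        {C | C ⊆ S ∧ IsCompact C ∧ WeaklyConnected C ∧ x ∈ C} with hP
      have hxP : ({x} : Set (EuclideanSpace ℝ (Fin d))) ∈ P :=
        ⟨Set.singleton_subset_iff.mpr hx, isCompact_singleton, wc_singleton x, rfl⟩
      have hzorn : ∀ 𝒞 ⊆ P, IsChain (· ⊆ ·) 𝒞 → 𝒞.Nonempty →
          ∃ ub ∈ P, ∀ T ∈ 𝒞, T ⊆ ub := by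
        intro 𝒞 h𝒞P hchain hne𝒞
        have hsubS : ⋃₀ 𝒞 ⊆ S := Set.sUnion_subset fun T hT => (h𝒞P hT).1
        have hclS : closure (⋃₀ 𝒞) ⊆ S := by
          calc closure (⋃₀ 𝒞) ⊆ closure S := closure_mono hsubS
          _ = S := hSc.isClosed.closure_eq
        refine ⟨closure (⋃₀ 𝒞), ⟨hclS, ?_, ?_, ?_⟩,
          fun T hT => (Set.subset_sUnion_of_mem hT).trans subset_closure⟩
        · exact IsCompact.of_isClosed_subset hSc isClosed_closure hclS
        · exact wc_closure (wc_sUnion_chain hchain fun T hT => (h𝒞P hT).2.2.1)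
        · obtain ⟨T, hT⟩ := hne𝒞
          exact subset_closure ⟨T, hT, (h𝒞P hT).2.2.2⟩
      obtain ⟨m, hxm, hmmax⟩ := zorn_subset_nonempty P hzorn _ hxP
      have hmP := hmmax.1
      refine ⟨m, ⟨⟨x, hxm rfl⟩, hmP.1, hmP.2.1, hmP.2.2.1, ?_⟩, hxm rfl⟩
      intro C' hC'S hC'c hC'wc hmC'
      exact Set.Subset.antisymm (hmmax.2 ⟨hC'S, hC'c, hC'wc, hmC' (hxm rfl)⟩ hmC') hmC'
end

section
/- Let A be the attractor of an affine IFS on ℝ^d (each map having invertible linear part). If A has nonempty interior, then A is equal to the closure of its interior. -/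
open Metric Filter Set
open scoped RealInnerProductSpace

/-- If the attractor `A` of an affine IFS on `ℝ^d` has nonempty interior,
then `A` is the closure of its interior. -/
theorem stmt14 {d N : ℕ} (hN : 2 ≤ N)
    (L : Fin N → EuclideanSpace ℝ (Fin d) →L[ℝ] EuclideanSpace ℝ (Fin d))
    (hL : ∀ i, Function.Bijective (L i))
    (a : Fin N → EuclideanSpace ℝ (Fin d))
    (f : Fin N → EuclideanSpace ℝ (Fin d) → EuclideanSpace ℝ (Fin d))
    (hf : ∀ i x, f i x = L i x + a i)
    (A : Set (EuclideanSpace ℝ (Fin d))) (hA : IsAttractor f A)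
    (hint : (interior A).Nonempty) :
    A = closure (interior A) := by
  obtain ⟨hAne, hAc, hconv⟩ := hA
  have hNpos : 0 < N := by omega
  have hcont : ∀ i, Continuous (f i) := by
    intro i
    have : f i = fun x => L i x + a i := funext (hf i)
    rw [this]
    exact ((L i).continuous).add continuous_const
  -- hutch preserves compactness and nonemptiness
  have hhc : ∀ K : Set (EuclideanSpace ℝ (Fin d)), IsCompact K → IsCompact (hutch f K) := fun K hK =>
    isCompact_iUnion fun i => hK.image (hcont i)
  have hhne : ∀ K : Set (EuclideanSpace ℝ (Fin d)), K.Nonempty → (hutch f K).Nonempty := by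
    rintro K ⟨x, hx⟩
    exact ⟨f ⟨0, hNpos⟩ x, mem_iUnion.2 ⟨⟨0, hNpos⟩, mem_image_of_mem _ hx⟩⟩
  have hiterc : ∀ (K : Set (EuclideanSpace ℝ (Fin d))), IsCompact K → K.Nonempty →
      ∀ n, IsCompact ((hutch f)^[n] K) ∧ ((hutch f)^[n] K).Nonempty := by
    intro K hK hKne n
    induction n with
    | zero => exact ⟨hK, hKne⟩
    | succ n ih =>
        rw [Function.iterate_succ_apply']
        exact ⟨hhc _ ih.1, hhne _ ih.2⟩
  have hedist : ∀ (K : Set (EuclideanSpace ℝ (Fin d))), IsCompact K → K.Nonempty → ∀ n,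
      EMetric.hausdorffEdist ((hutch f)^[n] K) A ≠ ⊤ := by
    intro K hK hKne n
    exact Metric.hausdorffEdist_ne_top_of_nonempty_of_bounded (hiterc K hK hKne n).2 hAne
      (hiterc K hK hKne n).1.isBounded hAc.isBounded
  -- Step 1: hutch f A ⊆ A
  have hFA : hutch f A ⊆ A := by
    rintro y hy
    rw [hutch, mem_iUnion] at hy
    obtain ⟨i, x, hx, rfl⟩ := hy
    have hlim := hconv A hAne hAc
    have hz : ∀ n, ∃ z ∈ (hutch f)^[n] A, infDist x ((hutch f)^[n] A) = dist x z :=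
      fun n => (hiterc A hAc hAne n).1.exists_infDist_eq_dist (hiterc A hAc hAne n).2 x
    choose z hzmem hzdist using hz
    have hbound : ∀ n, infDist (f i x) A ≤
        ‖L i‖ * hausdorffDist ((hutch f)^[n] A) A
          + hausdorffDist ((hutch f)^[n + 1] A) A := by
      intro n
      have h1 : infDist (f i x) A ≤ infDist (f i (z n)) A + dist (f i x) (f i (z n)) :=
        infDist_le_infDist_add_dist
      have h2 : dist (f i x) (f i (z n)) ≤ ‖L i‖ * dist x (z n) := by
        have he : f i x - f i (z n) = L i (x - z n) := by
          rw [hf i x, hf i (z n), map_sub]; abel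
        rw [dist_eq_norm, he, dist_eq_norm]
        exact (L i).le_opNorm _
      have h3 : dist x (z n) ≤ hausdorffDist ((hutch f)^[n] A) A := by
        rw [← hzdist]
        calc infDist x ((hutch f)^[n] A)
            ≤ hausdorffDist A ((hutch f)^[n] A) :=
              infDist_le_hausdorffDist_of_mem hx (by
                rw [EMetric.hausdorffEdist_comm]; exact hedist A hAc hAne n)
          _ = hausdorffDist ((hutch f)^[n] A) A := hausdorffDist_comm
      have h4 : infDist (f i (z n)) A ≤ hausdorffDist ((hutch f)^[n + 1] A) A := by
        refine infDist_le_hausdorffDist_of_mem ?_ (hedist A hAc hAne (n + 1))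
        rw [Function.iterate_succ_apply']
        exact mem_iUnion.2 ⟨i, mem_image_of_mem _ (hzmem n)⟩
      calc infDist (f i x) A ≤ infDist (f i (z n)) A + dist (f i x) (f i (z n)) := h1
        _ ≤ hausdorffDist ((hutch f)^[n + 1] A) A + ‖L i‖ * dist x (z n) := by
            gcongr
        _ ≤ hausdorffDist ((hutch f)^[n + 1] A) A
              + ‖L i‖ * hausdorffDist ((hutch f)^[n] A) A := by
            gcongr
        _ = ‖L i‖ * hausdorffDist ((hutch f)^[n] A) A
              + hausdorffDist ((hutch f)^[n + 1] A) A := add_comm _ _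
    have htend : Tendsto (fun n : ℕ => ‖L i‖ * hausdorffDist ((hutch f)^[n] A) A
        + hausdorffDist ((hutch f)^[n + 1] A) A) atTop (nhds 0) := by
      have h1 := hlim.const_mul ‖L i‖
      have h2 := hlim.comp (tendsto_add_atTop_nat 1)
      have h3 := h1.add h2
      simp only [mul_zero, add_zero] at h3
      exact h3
    have hle : infDist (f i x) A ≤ 0 :=
      ge_of_tendsto htend (Eventually.of_forall hbound)
    have h0 : infDist (f i x) A = 0 := le_antisymm hle infDist_nonneg
    rw [← mem_closure_iff_infDist_zero hAne] at h0
    rwa [hAc.isClosed.closure_eq] at h0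
  -- each f i is an open map
  have hopen : ∀ i, IsOpenMap (f i) := by
    intro i
    have hbij : Function.Bijective ((L i).toLinearMap) := hL i
    let e := LinearEquiv.ofBijective (L i).toLinearMap hbij
    let ec : EuclideanSpace ℝ (Fin d) ≃L[ℝ] EuclideanSpace ℝ (Fin d) := e.toContinuousLinearEquiv
    have heq : f i = (fun x => x + a i) ∘ ec := by
      funext x
      show f i x = ec x + a i
      rw [hf i x]
      rfl
    rw [heq]
    exact (Homeomorph.addRight (a i)).isOpenMap.comp ec.toHomeomorph.isOpenMap
  -- Step 2: B := closure (interior A) is invariant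
  set B := closure (interior A) with hBdef
  have hBsubA : B ⊆ A := closure_minimal interior_subset hAc.isClosed
  have hBne : B.Nonempty := hint.mono subset_closure
  have hBc : IsCompact B := hAc.of_isClosed_subset isClosed_closure hBsubA
  have hFint : ∀ i, f i '' interior A ⊆ interior A := by
    intro i
    apply interior_maximal
    · refine Subset.trans ?_ hFA
      intro y hy
      exact mem_iUnion.2 ⟨i, image_mono interior_subset hy⟩
    · exact hopen i _ isOpen_interior
  have hFB : hutch f B ⊆ B := by
    intro y hy
    rw [hutch, mem_iUnion] at hy
    obtain ⟨i, x, hx, rfl⟩ := hy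
    have h1 : f i '' B ⊆ closure (f i '' interior A) :=
      image_closure_subset_closure_image (hcont i)
    have h2 : closure (f i '' interior A) ⊆ B := closure_mono (hFint i)
    exact h2 (h1 (mem_image_of_mem _ hx))
  have hFnB : ∀ n, (hutch f)^[n] B ⊆ B := by
    intro n
    induction n with
    | zero => exact subset_rfl
    | succ n ih =>
        rw [Function.iterate_succ_apply']
        refine Subset.trans ?_ hFB
        intro y hy
        rw [hutch, mem_iUnion] at hy ⊢
        obtain ⟨i, x, hx, rfl⟩ := hy
        exact ⟨i, mem_image_of_mem _ (ih hx)⟩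
  -- Step 3: A ⊆ B
  have hAB : A ⊆ B := by
    intro x hx
    have hlimB := hconv B hBne hBc
    have hbound : ∀ n, infDist x B ≤ hausdorffDist ((hutch f)^[n] B) A := by
      intro n
      calc infDist x B ≤ infDist x ((hutch f)^[n] B) :=
            infDist_le_infDist_of_subset (hFnB n) (hiterc B hBc hBne n).2
        _ ≤ hausdorffDist A ((hutch f)^[n] B) :=
            infDist_le_hausdorffDist_of_mem hx (by
              rw [EMetric.hausdorffEdist_comm]; exact hedist B hBc hBne n)
        _ = hausdorffDist ((hutch f)^[n] B) A := hausdorffDist_comm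
    have hle : infDist x B ≤ 0 := ge_of_tendsto hlimB (Eventually.of_forall hbound)
    have h0 : infDist x B = 0 := le_antisymm hle infDist_nonneg
    rw [← mem_closure_iff_infDist_zero hBne] at h0
    rwa [isClosed_closure.closure_eq] at h0
  exact le_antisymm hAB hBsubA
end

section
/- Let F_t be a bounded one-parameter family on ℝ^d. Then there is a closed ball B ⊆ ℝ^d such that F_t(B) ⊆ B for all t ∈ [0, t_0] (where F_t(B) = ⋃_{i=1}^N f_{(i,t)}(B) is the Hutchinson operator applied to B). Consequently, the attractor A_t is contained in B for all t ∈ [0, t_0). -/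
open Metric Filter Set
open scoped RealInnerProductSpace

lemma jsr_ge' {d N : ℕ} (hN : 0 < N)
    (L : Fin N → EuclideanSpace ℝ (Fin d) →L[ℝ] EuclideanSpace ℝ (Fin d)) (i : Fin N)
    (r : ℝ) (hr : 0 < r) (hsim : ∀ x, ‖L i x‖ = r * ‖x‖) (hρ : 0 < jsr L) :
    r ≤ jsr L := by
  have hNF : Nonempty (Fin N) := ⟨⟨0, hN⟩⟩
  set f : ℕ → ℝ := fun k =>
    (⨆ σ : Fin k → Fin N, ‖(List.ofFn fun j : Fin k => L (σ j)).prod‖) ^ ((1 : ℝ) / (k : ℝ)) with hf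
  have hjsr : jsr L = limsup f atTop := rfl
  rcases Nat.eq_zero_or_pos d with hd | hd
  · -- d = 0 : contradiction with hρ
    subst hd
    exfalso
    have hsub : Subsingleton (EuclideanSpace ℝ (Fin 0)) := ⟨fun a b => by ext j; exact j.elim0⟩
    have hz : ∀ T : EuclideanSpace ℝ (Fin 0) →L[ℝ] EuclideanSpace ℝ (Fin 0), ‖T‖ = 0 := by
      intro T
      have : T = 0 := ContinuousLinearMap.ext fun x => Subsingleton.elim _ _
      rw [this]; exact norm_zero
    have hev : ∀ᶠ k : ℕ in atTop, f k = 0 := by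
      filter_upwards [eventually_ge_atTop 1] with k hk
      have : (fun σ : Fin k → Fin N => ‖(List.ofFn fun j : Fin k => L (σ j)).prod‖)
          = fun _ => (0:ℝ) := funext fun σ => hz _
      rw [hf]
      simp only [this, ciSup_const]
      rw [Real.zero_rpow]
      positivity
    have : limsup f atTop = 0 := by
      rw [limsup_congr hev, limsup_const]
    rw [hjsr, this] at hρ; exact lt_irrefl _ hρ
  · -- d > 0
    have hx0 : ∃ x : EuclideanSpace ℝ (Fin d), ‖x‖ = 1 :=
      ⟨EuclideanSpace.single ⟨0, hd⟩ 1, by simp⟩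
    obtain ⟨x₀, hx₀⟩ := hx0
    have hpow : ∀ k : ℕ, ∀ x, ‖(List.ofFn fun _ : Fin k => L i).prod x‖ = r ^ k * ‖x‖ := by
      intro k
      induction k with
      | zero => intro x; simp
      | succ n ih =>
        intro x
        rw [List.ofFn_succ, List.prod_cons]
        have : (L i * (List.ofFn fun _ : Fin n => L i).prod) x
            = L i ((List.ofFn fun _ : Fin n => L i).prod x) := rfl
        rw [this, hsim, ih, pow_succ]
        ring
    have hfk : ∀ k : ℕ, 1 ≤ k → r ≤ f k := by
      intro k hk
      have hkne : (k : ℝ) ≠ 0 := by positivity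
      have h1 : r ^ k ≤ ‖(List.ofFn fun _ : Fin k => L i).prod‖ := by
        have := (List.ofFn fun _ : Fin k => L i).prod.le_opNorm x₀
        rw [hpow k x₀, hx₀, mul_one, mul_one] at this
        exact this
      have hbdd : BddAbove (Set.range fun σ : Fin k → Fin N =>
          ‖(List.ofFn fun j : Fin k => L (σ j)).prod‖) := Set.Finite.bddAbove (Set.finite_range _)
      have h2 : ‖(List.ofFn fun _ : Fin k => L i).prod‖
          ≤ ⨆ σ : Fin k → Fin N, ‖(List.ofFn fun j : Fin k => L (σ j)).prod‖ :=
        le_ciSup hbdd (fun _ => i)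
      have h3 : r ^ k ≤ ⨆ σ : Fin k → Fin N, ‖(List.ofFn fun j : Fin k => L (σ j)).prod‖ :=
        h1.trans h2
      have h4 : (r ^ k : ℝ) ^ ((1:ℝ)/(k:ℝ)) ≤ f k :=
        Real.rpow_le_rpow (by positivity) h3 (by positivity)
      calc r = (r ^ k : ℝ) ^ ((1:ℝ)/(k:ℝ)) := by
                rw [← Real.rpow_natCast r k, ← Real.rpow_mul hr.le]
                rw [mul_one_div, div_self hkne, Real.rpow_one]
           _ ≤ f k := h4
    rw [hjsr, limsup_eq]
    rcases Set.eq_empty_or_nonempty {a | ∀ᶠ n in atTop, f n ≤ a} with he | hne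
    · exfalso
      rw [hjsr, limsup_eq, he, Real.sInf_empty] at hρ
      exact lt_irrefl _ hρ
    · refine le_csInf hne ?_
      intro b hb
      obtain ⟨k, hk1, hk2⟩ := ((eventually_ge_atTop 1).and hb).exists
      exact (hfk k hk1).trans hk2

/-- For a bounded one-parameter family on `ℝ^d` (a semi-linear similarity
family with a unique index of strictly maximal scaling ratio) there is a closed ball `B` with
`F_t(B) ⊆ B` for all `t ∈ [0, t₀]`; consequently the attractor `A_t` is contained in `B` for
all `t ∈ [0, t₀)`. -/
theorem stmt18 {d N : ℕ} (hN : 2 ≤ N)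
    (L : Fin N → EuclideanSpace ℝ (Fin d) →L[ℝ] EuclideanSpace ℝ (Fin d))
    (hL : ∀ i, Function.Bijective (L i))
    (r : Fin N → ℝ) (hr : ∀ i, 0 < r i)
    (hsim : ∀ (i : Fin N) (x : EuclideanSpace ℝ (Fin d)), ‖L i x‖ = r i * ‖x‖)
    (a q : Fin N → EuclideanSpace ℝ (Fin d))
    (hρ : 0 < jsr L)
    (hsemi : IsSemiLinearFamily L a q)
    (i₀ : Fin N) (hmax : ∀ i : Fin N, i ≠ i₀ → r i < r i₀) :
    ∃ (c : EuclideanSpace ℝ (Fin d)) (R : ℝ),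
      (∀ t : ℝ, 0 ≤ t → t ≤ 1 / jsr L →
        hutch (fam L a q t) (closedBall c R) ⊆ closedBall c R) ∧
      (∀ t : ℝ, 0 ≤ t → t < 1 / jsr L →
        ∀ A : Set (EuclideanSpace ℝ (Fin d)), IsAttractor (fam L a q t) A →
          A ⊆ closedBall c R) := by
  have hN0 : 0 < N := by omega
  -- t₀ positive
  have ht₀ : 0 < 1 / jsr L := by positivity
  -- the maximal ratio is at most the jsr
  have hkey : r i₀ ≤ jsr L := jsr_ge' hN0 L i₀ (r i₀) (hr i₀) (hsim i₀) hρ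
  -- each q i is the common fixed point : L i (q i) + a i = 0
  have ha : ∀ i, L i (q i) + a i = 0 := by
    intro i
    obtain ⟨h, hh⟩ := hsemi i
    obtain ⟨M₀, hM₀⟩ := hh 0 le_rfl ht₀
    have hq0 : q i = h.symm 0 := by
      have h1 := hM₀ (h.symm 0)
      have h2 : fam L a q 0 i (h.symm 0) = q i := by simp [fam]
      rw [h2] at h1
      simpa using h1
    set t1 := (1 / jsr L) / 2 with ht1def
    have ht1pos : 0 < t1 := by positivity
    obtain ⟨M, hM⟩ := hh t1 ht1pos.le (by linarith)
    have hfix : fam L a q t1 i (q i) = q i := by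
      rw [hM (q i), hq0]
      simp
    have : t1 • (L i (q i) + a i) = 0 := by
      have := hfix
      simp only [fam] at this
      linear_combination (norm := module) this
    rcases smul_eq_zero.mp this with h' | h'
    · exact absurd h' ht1pos.ne'
    · exact h'
  -- norm identity
  have hnorm : ∀ t : ℝ, 0 ≤ t → ∀ i x, ‖fam L a q t i x - q i‖ = t * (r i * ‖x - q i‖) := by
    intro t ht i x
    have h1 : fam L a q t i x - q i = t • (L i (x - q i)) := by
      have := ha i
      simp only [fam, map_sub]
      linear_combination (norm := module) t • this
    rw [h1, norm_smul, hsim, Real.norm_eq_abs, abs_of_nonneg ht]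
  -- the radius
  set D : Fin N → ℝ := fun i => ‖q i - q i₀‖ with hD
  set R : ℝ := Finset.univ.sup' ⟨i₀, Finset.mem_univ i₀⟩
      (fun i => 2 * D i * r i₀ / (r i₀ - r i)) with hR
  have hR0 : 0 ≤ R := by
    have h0 : 2 * D i₀ * r i₀ / (r i₀ - r i₀) = 0 := by simp [hD]
    have h1 := Finset.le_sup' (f := fun i => 2 * D i * r i₀ / (r i₀ - r i)) (Finset.mem_univ i₀)
    rw [h0] at h1
    exact h1
  -- per index inequality
  have hineq : ∀ i, r i / r i₀ * R + 2 * D i ≤ R := by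
    intro i
    by_cases hi : i = i₀
    · subst hi
      have : r i / r i = 1 := div_self (hr i).ne'
      rw [this]
      simp [hD]
    · have hlt := hmax i hi
      have hsub : 0 < r i₀ - r i := by linarith
      have hle : 2 * D i * r i₀ / (r i₀ - r i) ≤ R :=
        Finset.le_sup' (f := fun i => 2 * D i * r i₀ / (r i₀ - r i)) (Finset.mem_univ i)
      rw [div_le_iff₀ hsub] at hle
      have hri₀ := hr i₀
      rw [div_mul_eq_mul_div, div_add' _ _ _ hri₀.ne', div_le_iff₀ hri₀]
      nlinarith
  have hinv : ∀ t : ℝ, 0 ≤ t → t ≤ 1 / jsr L →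
      hutch (fam L a q t) (closedBall (q i₀) R) ⊆ closedBall (q i₀) R := by
    intro t ht0 ht1 y hy
    simp only [hutch, Set.mem_iUnion, Set.mem_image] at hy
    obtain ⟨i, x, hx, rfl⟩ := hy
    rw [Metric.mem_closedBall] at hx ⊢
    have hxB : ‖x - q i₀‖ ≤ R := by rwa [← dist_eq_norm]
    have htri : ‖fam L a q t i x - q i₀‖ ≤ ‖fam L a q t i x - q i‖ + D i := by
      simpa [hD] using norm_sub_le_norm_sub_add_norm_sub (fam L a q t i x) (q i) (q i₀)
    have htri2 : ‖x - q i‖ ≤ ‖x - q i₀‖ + D i := by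
      have := norm_sub_le_norm_sub_add_norm_sub x (q i₀) (q i)
      simpa [hD, norm_sub_rev (q i) (q i₀)] using this
    have hs : t * r i ≤ r i / r i₀ := by
      have h1 : t ≤ 1 / r i₀ := le_trans ht1 (one_div_le_one_div_of_le (hr i₀) hkey)
      calc t * r i ≤ (1 / r i₀) * r i := by nlinarith [hr i, h1]
        _ = r i / r i₀ := by ring
    have hs1 : r i / r i₀ ≤ 1 := by
      rcases eq_or_ne i i₀ with h' | h'
      · subst h'; rw [div_self (hr i).ne']
      · rw [div_le_one (hr i₀)]; exact (hmax i h').le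
    have hD0 : 0 ≤ D i := norm_nonneg _
    have hxq : 0 ≤ ‖x - q i‖ := norm_nonneg _
    have hs0 : 0 ≤ r i / r i₀ := div_nonneg (hr i).le (hr i₀).le
    rw [dist_eq_norm]
    have hn := hnorm t ht0 i x
    have hkey2 := hineq i
    have f1 : t * (r i * ‖x - q i‖) ≤ (r i / r i₀) * ‖x - q i‖ := by
      calc t * (r i * ‖x - q i‖) = (t * r i) * ‖x - q i‖ := by ring
        _ ≤ (r i / r i₀) * ‖x - q i‖ := mul_le_mul_of_nonneg_right hs hxq
    have f2 : (r i / r i₀) * ‖x - q i‖ ≤ (r i / r i₀) * (‖x - q i₀‖ + D i) :=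
      mul_le_mul_of_nonneg_left htri2 hs0
    have f3a : (r i / r i₀) * ‖x - q i₀‖ ≤ (r i / r i₀) * R :=
      mul_le_mul_of_nonneg_left hxB hs0
    have f3b : (r i / r i₀) * D i ≤ D i := mul_le_of_le_one_left hD0 hs1
    nlinarith [htri, hn, f1, f2, f3a, f3b, hkey2]
  refine ⟨q i₀, R, hinv, ?_⟩
  · -- attractor containment
    intro t ht0 ht1 A hA
    obtain ⟨hAne, hAcomp, hconv⟩ := hA
    set B := closedBall (q i₀) R with hB
    have hBne : B.Nonempty := Metric.nonempty_closedBall.mpr hR0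
    have hBcomp : IsCompact B := isCompact_closedBall _ _
    have hmono : ∀ K K' : Set (EuclideanSpace ℝ (Fin d)), K ⊆ K' →
        hutch (fam L a q t) K ⊆ hutch (fam L a q t) K' := by
      intro K K' hKK
      exact Set.iUnion_mono fun i => Set.image_mono hKK
    have hBinv : hutch (fam L a q t) B ⊆ B := hinv t ht0 ht1.le
    have hiter : ∀ n : ℕ, (hutch (fam L a q t))^[n] B ⊆ B := by
      intro n
      induction n with
      | zero => exact subset_rfl
      | succ n ih =>
        rw [Function.iterate_succ_apply']
        exact (hmono _ _ ih).trans hBinv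
    have hcont : ∀ i : Fin N, Continuous (fam L a q t i) := by
      intro i
      exact (((L i).continuous.add continuous_const).const_smul t).add continuous_const
    have hNE : Nonempty (Fin N) := ⟨⟨0, hN0⟩⟩
    have hprop : ∀ n : ℕ, ((hutch (fam L a q t))^[n] B).Nonempty ∧
        IsCompact ((hutch (fam L a q t))^[n] B) := by
      intro n
      induction n with
      | zero => exact ⟨hBne, hBcomp⟩
      | succ n ih =>
        rw [Function.iterate_succ_apply']
        obtain ⟨hne, hcomp⟩ := ih
        constructor
        · obtain ⟨x, hx⟩ := hne
          exact ⟨fam L a q t (Classical.arbitrary (Fin N)) x,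
            Set.mem_iUnion.mpr ⟨Classical.arbitrary (Fin N), Set.mem_image_of_mem _ hx⟩⟩
        · exact isCompact_iUnion fun i => hcomp.image (hcont i)
    have hconvB := hconv B hBne hBcomp
    intro x hx
    have hinf : infDist x B ≤ 0 := by
      refine ge_of_tendsto' hconvB ?_
      intro n
      have h1 : infDist x B ≤ infDist x ((hutch (fam L a q t))^[n] B) :=
        infDist_le_infDist_of_subset (hiter n) (hprop n).1
      have hfin : hausdorffEDist ((hutch (fam L a q t))^[n] B) A ≠ ⊤ :=
        hausdorffEdist_ne_top_of_nonempty_of_bounded (hprop n).1 hAne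
          (hprop n).2.isBounded hAcomp.isBounded
      have h2 : infDist x ((hutch (fam L a q t))^[n] B)
          ≤ hausdorffDist A ((hutch (fam L a q t))^[n] B) :=
        infDist_le_hausdorffDist_of_mem hx (by rwa [hausdorffEDist_comm] at hfin)
      rw [hausdorffDist_comm] at h2
      exact h1.trans h2
    have hinf0 : infDist x B = 0 := le_antisymm hinf (infDist_nonneg)
    have : x ∈ closure B := (mem_closure_iff_infDist_zero hBne).mpr hinf0
    rwa [IsClosed.closure_eq Metric.isClosed_closedBall] at this
end
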